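/- The polynomial A_d^{(0)}(t) = ∑_{σ} t^{des(σ)}, summing over all r-colored permutations σ of [d] with ε_1 = 0 and ε_d = 0, is a symmetric (palindromic) polynomial of degree d−1: its coefficient of t^m equals its coefficient of t^{d−1−m} for all 0 ≤ m ≤ d−1. -/

import Mathlib

/-- Number of descents of an `r`-colored permutation of `[d]` (zero-based indexing),
with the conventions σ_{d+1} = d+1, ε_{d+1} = 0: position `i` (1-based `i+1`) is a
descent iff ε_{i+1} > ε_{i+2}, or ε_{i+1} = ε_{i+2} and σ_{i+1} > σ_{i+2}; the last
position is a descent iff its color is nonzero. -/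
noncomputable def colDes (d r : ℕ) (σ : Fin d → Fin d) (ε : Fin d → Fin r) : ℕ :=
  Nat.card {i : Fin d //
    if h : i.1 + 1 < d then
      ε ⟨i.1 + 1, h⟩ < ε i ∨ (ε i = ε ⟨i.1 + 1, h⟩ ∧ σ ⟨i.1 + 1, h⟩ < σ i)
    else 0 < (ε i : ℕ)}

/-- Coefficient of t^m in A_d^{(0)}(t): the number of r-colored permutations of [d]
with ε_1 = 0, ε_d = 0, and exactly m descents. -/
noncomputable def countDes0 (r d m : ℕ) : ℕ :=
  Nat.card {p : (Fin d → Fin d) × (Fin d → Fin r) //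
    Function.Bijective p.1 ∧
    (∀ i : Fin d, i.1 = 0 → (p.2 i : ℕ) = 0) ∧
    (∀ i : Fin d, i.1 = d - 1 → (p.2 i : ℕ) = 0) ∧
    colDes d r p.1 p.2 = m}

/-- The descent predicate. -/
def descP (d r : ℕ) (σ : Fin d → Fin d) (ε : Fin d → Fin r) (i : Fin d) : Prop :=
  if h : i.1 + 1 < d then
    ε ⟨i.1 + 1, h⟩ < ε i ∨ (ε i = ε ⟨i.1 + 1, h⟩ ∧ σ ⟨i.1 + 1, h⟩ < σ i)
  else 0 < (ε i : ℕ)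

open Classical in
lemma colDes_eq_card (d r : ℕ) (σ : Fin d → Fin d) (ε : Fin d → Fin r) :
    colDes d r σ ε = (Finset.univ.filter (descP d r σ ε)).card := by
  rw [colDes, Nat.card_eq_fintype_card]
  convert Fintype.card_subtype (p := descP d r σ ε)
  exact Iff.rfl

lemma descP_rev_iff {d r : ℕ} (hd : 2 ≤ d) {σ : Fin d → Fin d} {ε : Fin d → Fin r}
    (hσ : Function.Injective σ) (i : Fin d) (hi : i.1 + 1 < d) :
    descP d r (σ ∘ Fin.rev) (ε ∘ Fin.rev) i ↔
      ¬ descP d r σ ε ⟨d - 2 - i.1, by omega⟩ := by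
  have hk : (d - 2 - i.1) + 1 < d := by omega
  rw [descP, descP, dif_pos hi, dif_pos hk]
  have h1 : Fin.rev i = ⟨d - 2 - i.1 + 1, by omega⟩ := by
    ext; simp [Fin.val_rev]; omega
  have h2 : Fin.rev (⟨i.1 + 1, hi⟩ : Fin d) = ⟨d - 2 - i.1, by omega⟩ := by
    ext; simp [Fin.val_rev]; omega
  have hne : σ ⟨d - 2 - i.1, by omega⟩ ≠ σ ⟨d - 2 - i.1 + 1, by omega⟩ := by
    intro h
    have := hσ h
    simp [Fin.ext_iff] at this
  simp only [Function.comp_apply, h1, h2]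
  have hne' : (σ ⟨d - 2 - i.1, by omega⟩ : ℕ) ≠ (σ ⟨d - 2 - i.1 + 1, by omega⟩ : ℕ) := by
    simpa [Fin.ext_iff] using hne
  simp only [Fin.lt_def, Fin.ext_iff]
  omega

lemma colDes_rev {d r : ℕ} (hd : 2 ≤ d) {σ : Fin d → Fin d} {ε : Fin d → Fin r}
    (hσ : Function.Injective σ)
    (h0 : (ε ⟨0, by omega⟩ : ℕ) = 0) (hl : (ε ⟨d - 1, by omega⟩ : ℕ) = 0) :
    colDes d r (σ ∘ Fin.rev) (ε ∘ Fin.rev) = d - 1 - colDes d r σ ε ∧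
      colDes d r σ ε ≤ d - 1 := by
  classical
  rw [colDes_eq_card, colDes_eq_card]
  -- any descent position satisfies i+1 < d
  have hlt : ∀ k : Fin d, descP d r σ ε k → k.1 + 1 < d := by
    intro k hk
    by_contra h
    have hkd : k = ⟨d - 1, by omega⟩ := Fin.ext (show k.1 = d - 1 by omega)
    rw [descP, dif_neg h, hkd, hl] at hk
    exact lt_irrefl 0 hk
  have hA : Finset.univ.filter (descP d r σ ε) =
      Finset.univ.filter (fun k : Fin d => k.1 + 1 < d ∧ descP d r σ ε k) := by
    ext k
    simp only [Finset.mem_filter, Finset.mem_univ, true_and]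
    exact ⟨fun h => ⟨hlt k h, h⟩, fun h => h.2⟩
  have hB : Finset.univ.filter (descP d r (σ ∘ Fin.rev) (ε ∘ Fin.rev)) =
      Finset.univ.filter (fun i : Fin d => i.1 + 1 < d ∧
        ¬ descP d r σ ε ⟨d - 2 - i.1, by omega⟩) := by
    ext i
    simp only [Finset.mem_filter, Finset.mem_univ, true_and]
    by_cases hi : i.1 + 1 < d
    · rw [descP_rev_iff hd hσ i hi]
      exact ⟨fun h => ⟨hi, h⟩, fun h => h.2⟩
    · constructor
      · intro h
        exfalso
        rw [descP, dif_neg hi] at h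
        have : Fin.rev i = ⟨0, by omega⟩ := by
          ext; simp [Fin.val_rev]; omega
        rw [Function.comp_apply, this, h0] at h
        exact lt_irrefl 0 h
      · intro h; exact absurd h.1 hi
  rw [hA, hB]
  -- bijection i ↦ d - 2 - i between the ¬descP-reversed set and the complement set
  have hbij : (Finset.univ.filter (fun i : Fin d => i.1 + 1 < d ∧
        ¬ descP d r σ ε ⟨d - 2 - i.1, by omega⟩)).card =
      (Finset.univ.filter (fun k : Fin d => k.1 + 1 < d ∧ ¬ descP d r σ ε k)).card := by
    refine Finset.card_nbij' (fun i => (⟨d - 2 - i.1, by omega⟩ : Fin d))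
      (fun k => (⟨d - 2 - k.1, by omega⟩ : Fin d)) ?_ ?_ ?_ ?_
    · intro i hi
      simp only [Finset.mem_coe, Finset.mem_filter, Finset.mem_univ, true_and] at hi ⊢
      exact ⟨by omega, hi.2⟩
    · intro k hk
      simp only [Finset.mem_coe, Finset.mem_filter, Finset.mem_univ, true_and] at hk ⊢
      refine ⟨by omega, ?_⟩
      convert hk.2 using 2
      ext
      simp only [Fin.val_mk]
      omega
    · intro i hi
      simp only [Finset.mem_coe, Finset.mem_filter, Finset.mem_univ, true_and] at hi
      ext
      simp only [Fin.val_mk]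
      omega
    · intro k hk
      simp only [Finset.mem_coe, Finset.mem_filter, Finset.mem_univ, true_and] at hk
      ext
      simp only [Fin.val_mk]
      omega
  rw [hbij]
  -- complementary counting inside positions with i+1 < d
  have hsplit :
      (Finset.univ.filter (fun k : Fin d => k.1 + 1 < d ∧ descP d r σ ε k)).card +
      (Finset.univ.filter (fun k : Fin d => k.1 + 1 < d ∧ ¬ descP d r σ ε k)).card =
      (Finset.univ.filter (fun k : Fin d => k.1 + 1 < d)).card := by
    rw [show (Finset.univ.filter (fun k : Fin d => k.1 + 1 < d ∧ descP d r σ ε k)) =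
        (Finset.univ.filter (fun k : Fin d => k.1 + 1 < d)).filter (descP d r σ ε) by
      rw [Finset.filter_filter],
      show (Finset.univ.filter (fun k : Fin d => k.1 + 1 < d ∧ ¬ descP d r σ ε k)) =
        (Finset.univ.filter (fun k : Fin d => k.1 + 1 < d)).filter
          (fun k => ¬ descP d r σ ε k) by rw [Finset.filter_filter]]
    exact Finset.card_filter_add_card_filter_not _
  have hS : (Finset.univ.filter (fun k : Fin d => k.1 + 1 < d)).card = d - 1 := by
    have : (Finset.univ.filter (fun k : Fin d => k.1 + 1 < d)) =
        Finset.univ.erase ⟨d - 1, by omega⟩ := by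
      ext k
      have hv : ((⟨d - 1, by omega⟩ : Fin d) : ℕ) = d - 1 := rfl
      simp only [Finset.mem_filter, Finset.mem_univ, true_and, Finset.mem_erase,
        and_true, Fin.ext_iff]
      omega
    rw [this, Finset.card_erase_of_mem (Finset.mem_univ _), Finset.card_univ,
      Fintype.card_fin]
  omega

theorem A0_symmetric (d r : ℕ) (hd : 1 ≤ d) (hr : 1 ≤ r) (m : ℕ) (hm : m ≤ d - 1) :
    countDes0 r d m = countDes0 r d (d - 1 - m) := by
  rcases eq_or_lt_of_le hd with h1 | hd2
  · have h2 : d - 1 - m = m := by omega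
    rw [h2]
  · have hd2 : 2 ≤ d := hd2
    rw [countDes0, countDes0]
    apply Nat.card_congr
    have key : ∀ (k : ℕ) (p : (Fin d → Fin d) × (Fin d → Fin r)),
        (Function.Bijective p.1 ∧
          (∀ i : Fin d, i.1 = 0 → (p.2 i : ℕ) = 0) ∧
          (∀ i : Fin d, i.1 = d - 1 → (p.2 i : ℕ) = 0) ∧
          colDes d r p.1 p.2 = k) →
        (Function.Bijective (p.1 ∘ Fin.rev) ∧
          (∀ i : Fin d, i.1 = 0 → ((p.2 ∘ Fin.rev) i : ℕ) = 0) ∧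
          (∀ i : Fin d, i.1 = d - 1 → ((p.2 ∘ Fin.rev) i : ℕ) = 0) ∧
          colDes d r (p.1 ∘ Fin.rev) (p.2 ∘ Fin.rev) = d - 1 - k) := by
      rintro k ⟨σ, ε⟩ ⟨hb, hz, hl, hdes⟩
      refine ⟨hb.comp (Fin.rev_involutive.bijective), ?_, ?_, ?_⟩
      · intro i hi
        apply hl
        simp [Fin.val_rev]; omega
      · intro i hi
        apply hz
        simp [Fin.val_rev]; omega
      · have := colDes_rev hd2 hb.injective
          (hz ⟨0, by omega⟩ rfl) (hl ⟨d - 1, by omega⟩ rfl)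
        rw [this.1, hdes]
    refine ⟨fun p => ⟨(p.1.1 ∘ Fin.rev, p.1.2 ∘ Fin.rev), key m p.1 p.2⟩,
      fun q => ⟨(q.1.1 ∘ Fin.rev, q.1.2 ∘ Fin.rev), ?_⟩, ?_, ?_⟩
    · have h := key (d - 1 - m) q.1 q.2
      have h2 : d - 1 - (d - 1 - m) = m := by omega
      rwa [h2] at h
    · intro p
      apply Subtype.ext
      apply Prod.ext <;> funext i <;> simp [Function.comp_apply, Fin.rev_rev]
    · intro q
      apply Subtype.ext
      apply Prod.ext <;> funext i <;> simp [Function.comp_apply, Fin.rev_rev]
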